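/- Let A be a left Leibniz algebra and let b be a nonzero product of n ≥ 1 copies of an element a ∈ A (with some bracketing). Then b = a(a(⋯(aa)⋯)), i.e., b is a right-normed power of a. -/

import Mathlib

/-- `IsProd mul a n b` : `b` is a product of `n` copies of `a` with some bracketing. -/
inductive IsProd {F A : Type*} [Field F] [AddCommGroup A] [Module F A]
    (mul : A →ₗ[F] A →ₗ[F] A) (a : A) : ℕ → A → Prop
  | base : IsProd mul a 1 a
  | mul {m n : ℕ} {u v : A} : IsProd mul a m u → IsProd mul a n v →
      IsProd mul a (m + n) (mul u v)

/-- `rnPow mul a k` is the right-normed product of `k+1` copies of `a`: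
`a(a(⋯(aa)⋯))`. -/
def rnPow {F A : Type*} [Field F] [AddCommGroup A] [Module F A]
    (mul : A →ₗ[F] A →ₗ[F] A) (a : A) : ℕ → A
  | 0 => a
  | k + 1 => mul a (rnPow mul a k)

/-- a nonzero product of `n ≥ 1` copies of `a` is the right-normed power. -/
theorem prod_eq_rnPow {F A : Type*} [Field F] [AddCommGroup A] [Module F A]
    (mul : A →ₗ[F] A →ₗ[F] A)
    (leibniz : ∀ a b c : A, mul a (mul b c) = mul (mul a b) c + mul b (mul a c))
    {a b : A} {n : ℕ} (hn : 1 ≤ n) (hb : IsProd mul a n b) (hb0 : b ≠ 0) :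
    b = rnPow mul a (n - 1) := by
  have key : ∀ {m : ℕ} {u : A}, IsProd mul a m u →
      (u = a ∧ m = 1) ∨ (∀ x, mul u x = 0) := by
    intro m u h
    induction h with
    | base => exact Or.inl ⟨rfl, rfl⟩
    | @mul m n u v hu hv ihu ihv =>
      right
      rcases ihu with ⟨hua, rfl⟩ | hu0
      · subst u
        rcases ihv with ⟨hva, rfl⟩ | hv0
        · subst v
          intro x
          have := leibniz a a x
          exact right_eq_add.mp this
        · intro x
          have := leibniz a v x
          have h2 : mul (mul a v) x = mul a (mul v x) - mul v (mul a x) := by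
            rw [this]; abel
          rw [h2, hv0, hv0]; simp
      · intro x
        have := leibniz u v x
        have h2 : mul (mul u v) x = mul u (mul v x) - mul v (mul u x) := by
          rw [this]; abel
        rw [h2, hu0, hu0]; simp
  have pos : ∀ {m : ℕ} {u : A}, IsProd mul a m u → 1 ≤ m := by
    intro m u h
    induction h with
    | base => exact le_refl 1
    | @mul m n u v hu hv ihu ihv => omega
  have main : ∀ {m : ℕ} {u : A}, IsProd mul a m u →
      u = rnPow mul a (m - 1) ∨ u = 0 := by
    intro m u h
    induction h with
    | base => exact Or.inl rfl
    | @mul m n u v hu hv ihu ihv =>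
      rcases key hu with ⟨hua, rfl⟩ | hu0
      · subst u
        rcases ihv with hv1 | hv0
        · left
          have hn1 := pos hv
          have : 1 + n - 1 = (n - 1) + 1 := by omega
          rw [this, hv1]
          rfl
        · right; rw [hv0]; simp
      · right; exact hu0 v
  rcases main hb with h | h
  · exact h
  · exact absurd h hb0
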